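/- Let x₁, x₂ : ℝ → EuclideanSpace ℝ (Fin 2) be differentiable trajectories of two agents, let m_s > 0 be the safety margin, and let α : ℝ → ℝ be strictly monotone increasing, locally Lipschitz with α 0 = 0. Define h t = ‖x₁ t − x₂ t‖ − m_s. Assume ‖x₁ 0 − x₂ 0‖ ≥ m_s, that x₁ t ≠ x₂ t for all t ≥ 0, and that for all t ≥ 0 the controls u_i = deriv x_i satisfy the CBF condition ⟪x₁ t − x₂ t, deriv x₁ t − deriv x₂ t⟫ / ‖x₁ t − x₂ t‖ ≥ −α (h t). Then ‖x₁ t − x₂ t‖ ≥ m_s for all t ≥ 0. -/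

import Mathlib

open scoped RealInnerProductSpace

lemma deriv_norm_eq_aux {y : ℝ → EuclideanSpace ℝ (Fin 2)} {t : ℝ}
    (hy : Differentiable ℝ y) (h0 : y t ≠ 0) :
    deriv (fun s => ‖y s‖) t = ⟪y t, deriv y t⟫ / ‖y t‖ := by
  have hg : DifferentiableAt ℝ (fun s => ‖y s‖) t := (hy t).norm ℝ h0
  have h1 : HasDerivAt (fun s => ‖y s‖ ^ 2) (2 * ⟪y t, deriv y t⟫) t :=
    (hy t).hasDerivAt.norm_sq
  have h2 : HasDerivAt (fun s => ‖y s‖ ^ 2)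
      (2 * ‖y t‖ ^ 1 * deriv (fun s => ‖y s‖) t) t := by
    simpa using hg.hasDerivAt.fun_pow 2
  have heq := h1.unique h2
  have hn : ‖y t‖ ≠ 0 := norm_ne_zero_iff.mpr h0
  rw [eq_div_iff hn]
  rw [pow_one] at heq
  linarith

/-- Forward invariance of the collision-free set for two agents
(`Safe from collisions` constraint of the paper's AUV mission): with barrier
function `h = ‖x₁ - x₂‖ - m_s`, enforcing the CBF inequality
`⟪x₁ - x₂, ẋ₁ - ẋ₂⟫ / ‖x₁ - x₂‖ ≥ -α (h)` for a class-K function `α`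
keeps the inter-agent distance at least `m_s`. -/
theorem collision_avoidance_cbf
    (x₁ x₂ : ℝ → EuclideanSpace ℝ (Fin 2))
    (hx₁ : Differentiable ℝ x₁) (hx₂ : Differentiable ℝ x₂)
    (m_s : ℝ) (hms : 0 < m_s)
    (α : ℝ → ℝ) (hα : StrictMono α) (hα0 : α 0 = 0)
    (hαlip : LocallyLipschitz α)
    (h0 : m_s ≤ ‖x₁ 0 - x₂ 0‖)
    (hne : ∀ t : ℝ, 0 ≤ t → x₁ t ≠ x₂ t)
    (hcbf : ∀ t : ℝ, 0 ≤ t →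
      -α (‖x₁ t - x₂ t‖ - m_s) ≤
        ⟪x₁ t - x₂ t, deriv x₁ t - deriv x₂ t⟫ / ‖x₁ t - x₂ t‖) :
    ∀ t : ℝ, 0 ≤ t → m_s ≤ ‖x₁ t - x₂ t‖ := by
  set y : ℝ → EuclideanSpace ℝ (Fin 2) := fun s => x₁ s - x₂ s with hy_def
  have hy : Differentiable ℝ y := hx₁.sub hx₂
  set g : ℝ → ℝ := fun s => ‖y s‖ with hg_def
  have hgc : Continuous g := hy.continuous.norm
  intro t ht
  by_contra hlt
  push_neg at hlt
  -- the set of times in [0, t] where we are still safe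
  set S : Set ℝ := Set.Icc 0 t ∩ {s | m_s ≤ g s} with hS_def
  have hS_closed : IsClosed S :=
    isClosed_Icc.inter (isClosed_le continuous_const hgc)
  have hS_ne : S.Nonempty := ⟨0, ⟨le_refl 0, ht⟩, h0⟩
  have hS_bdd : BddAbove S := ⟨t, fun s hs => hs.1.2⟩
  set t₀ : ℝ := sSup S with ht₀_def
  have ht₀S : t₀ ∈ S := hS_closed.csSup_mem hS_ne hS_bdd
  have ht₀0 : 0 ≤ t₀ := ht₀S.1.1
  have ht₀t : t₀ ≤ t := ht₀S.1.2
  have ht₀g : m_s ≤ g t₀ := ht₀S.2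
  have ht₀lt : t₀ < t := ht₀t.lt_of_ne (fun h => not_le.mpr hlt (h ▸ ht₀g))
  -- beyond t₀, g < m_s
  have hsmall : ∀ s, t₀ < s → s ≤ t → g s < m_s := by
    intro s hs hst
    by_contra hge
    push_neg at hge
    have : s ∈ S := ⟨⟨le_trans ht₀0 hs.le, hst⟩, hge⟩
    exact absurd (le_csSup hS_bdd this) (not_le.mpr hs)
  -- derivative of g is nonnegative on (t₀, t)
  have hderiv : ∀ s ∈ Set.Ioo t₀ t, 0 ≤ deriv g s := by
    intro s hs
    have hs0 : 0 ≤ s := le_trans ht₀0 hs.1.le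
    have hne' : y s ≠ 0 := sub_ne_zero.mpr (hne s hs0)
    have hd : deriv g s = ⟪y s, deriv y s⟫ / ‖y s‖ := deriv_norm_eq_aux hy hne'
    have hdy : deriv y s = deriv x₁ s - deriv x₂ s := deriv_sub (hx₁ s) (hx₂ s)
    have hαneg : α (g s - m_s) < 0 := by
      have : g s - m_s < 0 := sub_neg.mpr (hsmall s hs.1 hs.2.le)
      calc α (g s - m_s) < α 0 := hα this
        _ = 0 := hα0
    have := hcbf s hs0
    rw [hd, hdy]
    linarith
  have hmono : MonotoneOn g (Set.Icc t₀ t) := by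
    apply monotoneOn_of_deriv_nonneg (convex_Icc t₀ t) (hgc.continuousOn)
    · intro s hs
      rw [interior_Icc] at hs
      have hs0 : 0 ≤ s := le_trans ht₀0 hs.1.le
      exact ((hy s).norm ℝ (sub_ne_zero.mpr (hne s hs0))).differentiableWithinAt
    · intro s hs
      rw [interior_Icc] at hs
      exact hderiv s hs
  have : g t₀ ≤ g t :=
    hmono ⟨le_refl t₀, ht₀t⟩ ⟨ht₀t, le_refl t⟩ ht₀t
  linarith
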